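/- Let p be an odd prime, n ≥ 2 an integer, and A an integer with 0 < A < n. Fix i with 0 ≤ i < n and let I_i = {x : 1 ≤ x ≤ p-1, x ≡ i (mod n)}. Then the set of residues mod n of the least positive residues of A·x mod p, as x ranges over I_i, has cardinality at most A. In particular, if A < n then there exists j with 0 ≤ j < n such that no x ∈ I_i has (A·x mod p) ≡ j (mod n). -/
import Mathlib


theorem stmt_1 (p A n i : ℤ) (hp : Prime p) (hodd : Odd p) (hn : 2 ≤ n)
    (hpn : n < p) (hA : 0 < A) (hAn : A < n) (hi : 0 ≤ i) (hin : i < n) :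
    ((((Finset.Icc 1 (p - 1)).filter (fun x => x % n = i)).image
        (fun x => ((A * x) % p) % n)).card : ℤ) ≤ A ∧
    ∃ j : ℤ, 0 ≤ j ∧ j < n ∧
      ∀ x : ℤ, 1 ≤ x → x ≤ p - 1 → x % n = i → ((A * x) % p) % n ≠ j := by
  have hn0 : (0:ℤ) < n := by linarith
  have hp0 : (0:ℤ) < p := by linarith
  set S := ((Finset.Icc 1 (p - 1)).filter (fun x => x % n = i)).image
      (fun x => ((A * x) % p) % n) with hS
  have hsub : S ⊆ (Finset.Icc 0 (A-1)).image (fun t => (A*i - p*t) % n) := by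
    intro y hy
    simp only [hS, Finset.mem_image, Finset.mem_filter, Finset.mem_Icc] at hy ⊢
    obtain ⟨x, ⟨⟨hx1, hx2⟩, hxi⟩, rfl⟩ := hy
    refine ⟨(A*x)/p, ⟨Int.ediv_nonneg (by positivity) hp0.le, ?_⟩, ?_⟩
    · have hlt : A*x < A*p := by nlinarith
      have : (A*x)/p < A := by
        rw [Int.ediv_lt_iff_lt_mul hp0]; linarith
      linarith
    · have hmod : (A*x) % p = A*x - p*((A*x)/p) := Int.emod_def (A*x) p
      rw [hmod]
      have h1 : x ≡ i [ZMOD n] := by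
        show x % n = i % n
        rw [hxi, Int.emod_eq_of_lt hi hin]
      have h2 : A*x - p*((A*x)/p) ≡ A*i - p*((A*x)/p) [ZMOD n] :=
        (h1.mul_left A).sub_right _
      exact h2.symm
  have hcard : S.card ≤ A.toNat := by
    calc S.card ≤ ((Finset.Icc 0 (A-1)).image (fun t => (A*i - p*t) % n)).card :=
          Finset.card_le_card hsub
      _ ≤ (Finset.Icc 0 (A-1)).card := Finset.card_image_le
      _ = A.toNat := by rw [Int.card_Icc]; omega
  constructor
  · calc (S.card : ℤ) ≤ (A.toNat : ℤ) := by exact_mod_cast hcard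
      _ = A := by omega
  · have hsub2 : S ⊆ Finset.Icc 0 (n-1) := by
      intro y hy
      simp only [hS, Finset.mem_image, Finset.mem_filter, Finset.mem_Icc] at hy ⊢
      obtain ⟨x, _, rfl⟩ := hy
      have h1 := Int.emod_nonneg ((A*x) % p) hn0.ne'
      have h2 := Int.emod_lt_of_pos ((A*x) % p) hn0
      omega
    have hlt : S.card < (Finset.Icc (0:ℤ) (n-1)).card := by
      rw [Int.card_Icc]; omega
    obtain ⟨j, hj, hjS⟩ := Finset.exists_of_ssubset
      (Finset.ssubset_iff_subset_ne.2 ⟨hsub2, fun h => by rw [h] at hlt; exact lt_irrefl _ hlt⟩)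
    simp only [Finset.mem_Icc] at hj
    refine ⟨j, hj.1, by omega, fun x hx1 hx2 hxi hne => hjS ?_⟩
    rw [hS, Finset.mem_image]
    exact ⟨x, Finset.mem_filter.2 ⟨Finset.mem_Icc.2 ⟨hx1, hx2⟩, hxi⟩, hne⟩
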